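/- Let ϖ ∈ m_C be a nonzero element and let A = O_C[[X]]. Then the commutative square formed by the canonical localization maps A → A[1/X], A → A[1/ϖ], A[1/X] → A[1/(X·ϖ)] and A[1/ϖ] → A[1/(X·ϖ)] is a pullback square of commutative rings; equivalently, the canonical ring homomorphism from A to the fiber product A[1/X] ×_{A[1/(X·ϖ)]} A[1/ϖ] is bijective. -/

import Mathlib

/-!
STATEMENT 16: Let `ϖ ∈ m_C` be nonzero and `A = O_C[[X]]`.  The square of canonical
localization maps `A → A[1/X]`, `A → A[1/ϖ]`, `A[1/X] → A[1/(X·ϖ)]`, `A[1/ϖ] → A[1/(X·ϖ)]`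
is a pullback square of commutative rings: the canonical map from `A` to the fiber product is
bijective (stated elementwise: the pair map is injective and every compatible pair of elements
comes from `A`).
-/

noncomputable section

/-- The valuation ring `O_C = {x : C | ‖x‖ ≤ 1}` of a nonarchimedean normed field. -/
def OC (C : Type) [NormedField C] (hna : IsNonarchimedean (norm : C → ℝ)) : Subring C where
  carrier := {x : C | ‖x‖ ≤ 1}
  mul_mem' := fun {a b} (ha : ‖a‖ ≤ 1) (hb : ‖b‖ ≤ 1) => by
    have : ‖a * b‖ = ‖a‖ * ‖b‖ := norm_mul a b
    simp only [Set.mem_setOf_eq, this]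
    nlinarith [norm_nonneg a, norm_nonneg b]
  one_mem' := by simp
  add_mem' := fun {a b} (ha : ‖a‖ ≤ 1) (hb : ‖b‖ ≤ 1) =>
    le_trans (hna a b) (max_le ha hb)
  zero_mem' := by simp
  neg_mem' := fun {a} (ha : ‖a‖ ≤ 1) => by simpa using ha


theorem aux16 (K : Type) [CommRing K] [IsDomain K] (ϖ : K) (hϖ0 : ϖ ≠ 0)
    (f : Localization.Away (PowerSeries.X : PowerSeries K) →+*
      Localization.Away ((PowerSeries.X : PowerSeries K) * PowerSeries.C ϖ))
    (hf : f.comp (algebraMap (PowerSeries K)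
        (Localization.Away (PowerSeries.X : PowerSeries K))) =
      algebraMap (PowerSeries K)
        (Localization.Away ((PowerSeries.X : PowerSeries K) * PowerSeries.C ϖ)))
    (g : Localization.Away (PowerSeries.C ϖ) →+*
      Localization.Away ((PowerSeries.X : PowerSeries K) * PowerSeries.C ϖ))
    (hg : g.comp (algebraMap (PowerSeries K)
        (Localization.Away (PowerSeries.C ϖ))) =
      algebraMap (PowerSeries K)
        (Localization.Away ((PowerSeries.X : PowerSeries K) * PowerSeries.C ϖ))) :
    (∀ a b : PowerSeries K,
      algebraMap _ (Localization.Away (PowerSeries.X : PowerSeries K)) a =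
        algebraMap _ _ b →
      algebraMap _ (Localization.Away (PowerSeries.C ϖ)) a = algebraMap _ _ b →
      a = b) ∧
    (∀ (u : Localization.Away (PowerSeries.X : PowerSeries K))
      (v : Localization.Away (PowerSeries.C ϖ)), f u = g v →
      ∃ a : PowerSeries K, algebraMap _ _ a = u ∧ algebraMap _ _ a = v) := by
  classical
  set R := PowerSeries K
  have hX : (PowerSeries.X : R) ≠ 0 := PowerSeries.X_ne_zero
  have hw : (PowerSeries.C ϖ) ≠ 0 := by
    simpa [map_eq_zero_iff _ PowerSeries.C_injective] using hϖ0
  have hXw : (PowerSeries.X : R) * PowerSeries.C ϖ ≠ 0 := mul_ne_zero hX hw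
  have injX : Function.Injective
      (algebraMap R (Localization.Away (PowerSeries.X : R))) :=
    IsLocalization.injective _ (powers_le_nonZeroDivisors_of_noZeroDivisors hX)
  have injXw : Function.Injective
      (algebraMap R (Localization.Away ((PowerSeries.X : R) * PowerSeries.C ϖ))) :=
    IsLocalization.injective _ (powers_le_nonZeroDivisors_of_noZeroDivisors hXw)
  constructor
  · intro a b h1 _
    exact injX h1
  · intro u v huv
    obtain ⟨⟨a, s⟩, hu⟩ := IsLocalization.surj (Submonoid.powers (PowerSeries.X : R)) u
    obtain ⟨n, hn⟩ := s.2
    have hn' : (PowerSeries.X : R) ^ n = (s : R) := hn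
    obtain ⟨⟨b, t⟩, hv⟩ := IsLocalization.surj (Submonoid.powers (PowerSeries.C ϖ)) v
    obtain ⟨m, hm⟩ := t.2
    have hm' : (PowerSeries.C ϖ) ^ m = (t : R) := hm
    simp only at hu hv
    rw [← hn'] at hu
    rw [← hm'] at hv
    -- push the two relations to the common localization
    have hfu : f u * algebraMap R _ (PowerSeries.X ^ n) = algebraMap R _ a := by
      have h := congrArg f hu
      rw [map_mul, ← RingHom.comp_apply, hf, ← RingHom.comp_apply, hf] at h
      exact h
    have hgv : g v * algebraMap R _ ((PowerSeries.C ϖ) ^ m) = algebraMap R _ b := by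
      have h := congrArg g hv
      rw [map_mul, ← RingHom.comp_apply, hg, ← RingHom.comp_apply, hg] at h
      exact h
    have key : a * (PowerSeries.C ϖ) ^ m = b * PowerSeries.X ^ n := by
      apply injXw
      rw [map_mul, map_mul, ← hfu, ← hgv, huv]
      ring
    -- divisibility by X ^ n
    have hdvd : (PowerSeries.X : R) ^ n ∣ a := by
      rw [PowerSeries.X_pow_dvd_iff]
      intro i hi
      have h1 := congrArg (PowerSeries.coeff i) key
      rw [← map_pow, PowerSeries.coeff_mul_C,
        PowerSeries.coeff_mul_X_pow', if_neg (by omega)] at h1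
      exact (mul_eq_zero.mp h1).resolve_right (pow_ne_zero _ hϖ0)
    obtain ⟨c, hc⟩ := hdvd
    refine ⟨c, ?_, ?_⟩
    · -- algebraMap c = u in Away X
      have hXn_unit : IsUnit (algebraMap R (Localization.Away (PowerSeries.X : R))
          (PowerSeries.X ^ n)) :=
        IsLocalization.map_units _ (⟨PowerSeries.X ^ n, n, rfl⟩ :
          Submonoid.powers (PowerSeries.X : R))
      apply hXn_unit.mul_left_cancel
      rw [← map_mul, ← hc, ← hu]
      ring
    · -- algebraMap c = v in Away (C ϖ)
      have hcb : c * (PowerSeries.C ϖ) ^ m = b := by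
        have hXn : (PowerSeries.X : R) ^ n ≠ 0 := pow_ne_zero _ hX
        apply mul_left_cancel₀ hXn
        calc (PowerSeries.X : R) ^ n * (c * (PowerSeries.C ϖ) ^ m)
            = (PowerSeries.X ^ n * c) * (PowerSeries.C ϖ) ^ m := by ring
          _ = a * (PowerSeries.C ϖ) ^ m := by rw [← hc]
          _ = PowerSeries.X ^ n * b := by rw [key]; ring
      have hwm_unit : IsUnit (algebraMap R (Localization.Away (PowerSeries.C ϖ))
          ((PowerSeries.C ϖ) ^ m)) :=
        IsLocalization.map_units _ (⟨(PowerSeries.C ϖ) ^ m, m, rfl⟩ :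
          Submonoid.powers (PowerSeries.C ϖ))
      apply hwm_unit.mul_left_cancel
      rw [← map_mul, mul_comm _ c, hcb, ← hv]
      ring

theorem statement16 (p : ℕ) [Fact p.Prime] (C : Type) [NontriviallyNormedField C]
    [CharP C p] [PerfectRing C p] [CompleteSpace C]
    (hna : IsNonarchimedean (norm : C → ℝ))
    (ϖ : OC C hna) (hϖ0 : ϖ ≠ 0) (hϖ : ‖(ϖ : C)‖ < 1)
    -- the canonical localization maps `A[1/X] → A[1/(X·ϖ)]` and `A[1/ϖ] → A[1/(X·ϖ)]`,
    -- characterized by compatibility with the localization maps from `A = O_C[[X]]`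
    (f : Localization.Away (PowerSeries.X : PowerSeries (OC C hna)) →+*
      Localization.Away
        ((PowerSeries.X : PowerSeries (OC C hna)) * PowerSeries.C ϖ))
    (hf : f.comp (algebraMap (PowerSeries (OC C hna))
        (Localization.Away (PowerSeries.X : PowerSeries (OC C hna)))) =
      algebraMap (PowerSeries (OC C hna))
        (Localization.Away
          ((PowerSeries.X : PowerSeries (OC C hna)) * PowerSeries.C ϖ)))
    (g : Localization.Away (PowerSeries.C ϖ) →+*
      Localization.Away
        ((PowerSeries.X : PowerSeries (OC C hna)) * PowerSeries.C ϖ))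
    (hg : g.comp (algebraMap (PowerSeries (OC C hna))
        (Localization.Away (PowerSeries.C ϖ))) =
      algebraMap (PowerSeries (OC C hna))
        (Localization.Away
          ((PowerSeries.X : PowerSeries (OC C hna)) * PowerSeries.C ϖ))) :
    -- injectivity of the map to the fiber product
    (∀ a b : PowerSeries (OC C hna),
      algebraMap _ (Localization.Away (PowerSeries.X : PowerSeries (OC C hna))) a =
        algebraMap _ _ b →
      algebraMap _ (Localization.Away (PowerSeries.C ϖ)) a =
        algebraMap _ _ b →
      a = b) ∧
    -- surjectivity onto the fiber product
    (∀ (u : Localization.Away (PowerSeries.X : PowerSeries (OC C hna)))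
      (v : Localization.Away (PowerSeries.C ϖ)), f u = g v →
      ∃ a : PowerSeries (OC C hna),
        algebraMap _ _ a = u ∧ algebraMap _ _ a = v) := by

  exact aux16 (OC C hna) ϖ (by exact_mod_cast hϖ0) f hf g hg
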